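/- Product with the logic of 'elsewhere' (Diff) and the one-variable fragment with quantifier subscripts ≤ 1: let φ be a propositional bimodal formula in ◇_h, ◇_v with modal depth m. Associate with each propositional variable p_i a unary predicate P_i and with each ψ ∈ sub(φ) a fresh unary predicate Q_ψ, and define the translation ·^† by: p_i^† = P_i(x), ·^† commutes with ¬ and ∧, (◇_hψ)^† = ◇ψ^†, (◇_vψ)^† = Q_ψ(x). Let ∃^{≠}x ψ^† := (¬ψ^† ∧ ¬∃[≤0]x ψ^†) ∨ ¬∃[≤1]x ψ^† (expressing that some element other than the current one satisfies ψ^†), and let ζ_Diff := □^{≤m} ⋀_{ψ∈sub(φ)} ∀x(Q_ψ(x) ↔ ∃^{≠}x ψ^†). Then φ is satisfiable in some full product model whose vertical factor is the difference frame on a nonempty set V if and only if ζ_Diff ∧ φ^† is satisfiable with respect to QK (i.e., in some constant domain first-order Kripke model). All counting quantifiers occurring in ζ_Diff ∧ φ^† have subscripts at most 1. -/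

import Mathlib

/-! Syntax of one-variable first-order modal formulas with counting quantifiers:
    φ ::= P(x) | ¬φ | (φ∧φ) | ◇φ | ∃[≤c]x φ. -/

inductive Fml : Type
  | atom : ℕ → Fml
  | neg : Fml → Fml
  | conj : Fml → Fml → Fml
  | dia : Fml → Fml
  | countLe : ℕ → Fml → Fml
deriving DecidableEq

namespace Fml

/-- Subformulas. -/
def sub : Fml → Finset Fml
  | atom n => {atom n}
  | neg ψ => insert (neg ψ) ψ.sub
  | conj ψ χ => insert (conj ψ χ) (ψ.sub ∪ χ.sub)
  | dia ψ => insert (dia ψ) ψ.sub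
  | countLe c ψ => insert (countLe c ψ) ψ.sub

/-- Modal depth. -/
def md : Fml → ℕ
  | atom _ => 0
  | neg ψ => ψ.md
  | conj ψ χ => max ψ.md χ.md
  | dia ψ => ψ.md + 1
  | countLe _ ψ => ψ.md

/-- Capacity: the largest counting-quantifier subscript (0 if none). -/
def cpt : Fml → ℕ
  | atom _ => 0
  | neg ψ => ψ.cpt
  | conj ψ χ => max ψ.cpt χ.cpt
  | dia ψ => ψ.cpt
  | countLe c ψ => max c ψ.cpt

/-- Length of the formula as a string, counting subscripts written in binary. -/
def len : Fml → ℕ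
  | atom _ => 1
  | neg ψ => ψ.len + 1
  | conj ψ χ => ψ.len + χ.len + 1
  | dia ψ => ψ.len + 1
  | countLe c ψ => ψ.len + Nat.size c + 1

/-- Predicate symbols occurring in a formula. -/
def preds : Fml → Finset ℕ
  | atom n => {n}
  | neg ψ => ψ.preds
  | conj ψ χ => ψ.preds ∪ χ.preds
  | dia ψ => ψ.preds
  | countLe _ ψ => ψ.preds

def imp (ψ χ : Fml) : Fml := neg (conj ψ (neg χ))
def or (ψ χ : Fml) : Fml := neg (conj (neg ψ) (neg χ))
def iff (ψ χ : Fml) : Fml := conj (ψ.imp χ) (χ.imp ψ)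
def box (ψ : Fml) : Fml := neg (dia (neg ψ))
/-- `∃x ψ := ¬∃[≤0]x ψ`. -/
def ex (ψ : Fml) : Fml := neg (countLe 0 ψ)
/-- `∀x ψ := ∃[≤0]x ¬ψ`. -/
def fal (ψ : Fml) : Fml := countLe 0 (neg ψ)
/-- A tautology. -/
def top : Fml := neg (conj (atom 0) (neg (atom 0)))

/-- `boxIter n ψ` is `□^n ψ`. -/
def boxIter : ℕ → Fml → Fml
  | 0, ψ => ψ
  | n+1, ψ => (boxIter n ψ).box

/-- `boxLe m ψ` is `⋀_{k=0}^{m} □^k ψ`. -/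
def boxLe : ℕ → Fml → Fml
  | 0, ψ => ψ
  | n+1, ψ => conj (boxLe n ψ) (boxIter (n+1) ψ)

end Fml

/-- A first-order Kripke model `M = (W,R,D,d,I)` (unary predicates suffice for the
one-variable fragment). -/
structure KModel where
  W : Type
  R : W → W → Prop
  D : Type
  Dne : Nonempty D
  dom : W → Set D
  domNe : ∀ w, (dom w).Nonempty
  I : W → ℕ → Set D
  Isub : ∀ w p, I w p ⊆ dom w

/-- Satisfaction `M,w ⊨^a φ`. -/
def KModel.sat (M : KModel) : Fml → M.W → M.D → Prop
  | .atom p, w, a => a ∈ M.I w p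
  | .neg ψ, w, a => ¬ M.sat ψ w a
  | .conj ψ χ, w, a => M.sat ψ w a ∧ M.sat χ w a
  | .dia ψ, w, a => ∃ v, M.R w v ∧ M.sat ψ v a
  | .countLe c ψ, w, _ => {b | b ∈ M.dom w ∧ M.sat ψ w b}.encard ≤ (c : ℕ∞)

def KModel.constDom (M : KModel) : Prop := ∀ u v, M.dom u = M.dom v
def KModel.expDom (M : KModel) : Prop := ∀ u v, M.R u v → M.dom u ⊆ M.dom v
def KModel.decDom (M : KModel) : Prop := ∀ u v, M.R u v → M.dom v ⊆ M.dom u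

/-- Satisfiability with respect to QK (constant domains). -/
def satQK (φ : Fml) : Prop :=
  ∃ M : KModel, M.constDom ∧ ∃ w a, a ∈ M.dom w ∧ M.sat φ w a

/-- Satisfiability with respect to QK^exp (expanding domains). -/
def satQKexp (φ : Fml) : Prop :=
  ∃ M : KModel, M.expDom ∧ ∃ w a, a ∈ M.dom w ∧ M.sat φ w a

/-- Satisfiability with respect to QK^dec (decreasing domains). -/
def satQKdec (φ : Fml) : Prop :=
  ∃ M : KModel, M.decDom ∧ ∃ w a, a ∈ M.dom w ∧ M.sat φ w a

/-- `R` is the immediate-successor (parent–child) relation of a rooted irreflexive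
intransitive tree of depth ≤ m with root `r`. -/
def IsTreeOfDepth {W : Type} (R : W → W → Prop) (r : W) (m : ℕ) : Prop :=
  ∃ depth : W → ℕ,
    depth r = 0 ∧ (∀ w, depth w ≤ m) ∧
    (∀ u v, R u v → depth v = depth u + 1) ∧
    (∀ v, v ≠ r → ∃! u, R u v) ∧
    (∀ v, Relation.ReflTransGen R r v)

/-! Propositional bimodal formulas: `◇` (= ◇_h) and `◇U` (the second modality,
read as the universal modality ◇_u or as the vertical modality ◇_v). -/

inductive BFml : Type
  | var : ℕ → BFml
  | neg : BFml → BFml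
  | conj : BFml → BFml → BFml
  | dia : BFml → BFml
  | diaU : BFml → BFml
deriving DecidableEq

namespace BFml

/-- Subformulas. -/
def subf : BFml → Finset BFml
  | var n => {var n}
  | neg ψ => insert (neg ψ) ψ.subf
  | conj ψ χ => insert (conj ψ χ) (ψ.subf ∪ χ.subf)
  | dia ψ => insert (dia ψ) ψ.subf
  | diaU ψ => insert (diaU ψ) ψ.subf

/-- Modal depth. -/
def md : BFml → ℕ
  | var _ => 0
  | neg ψ => ψ.md
  | conj ψ χ => max ψ.md χ.md
  | dia ψ => ψ.md + 1
  | diaU ψ => ψ.md + 1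

end BFml

/-- Conjunction of a list of formulas. -/
def conjList : List Fml → Fml
  | [] => Fml.top
  | ψ :: rest => Fml.conj ψ (conjList rest)

/-- A subframe product model: a nonempty set `S ⊆ W_h × V` of possible worlds, with the
horizontal relation induced by `Rh` and a vertical factor on `V` (universal for S5,
difference for Diff), together with a valuation. -/
structure ProdModel where
  Wh : Type
  Rh : Wh → Wh → Prop
  V : Type
  Vne : Nonempty V
  S : Set (Wh × V)
  Sne : S.Nonempty
  Val : ℕ → Set (Wh × V)

namespace ProdModel

/-- Satisfaction when the vertical factor is the universal (S5) frame on `V`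
(`◇U` is read as `◇_v`). -/
def satS5 (M : ProdModel) : BFml → M.Wh × M.V → Prop
  | .var k, p => p ∈ M.Val k
  | .neg ψ, p => ¬ M.satS5 ψ p
  | .conj ψ χ, p => M.satS5 ψ p ∧ M.satS5 χ p
  | .dia ψ, p => ∃ q, q ∈ M.S ∧ M.Rh p.1 q.1 ∧ p.2 = q.2 ∧ M.satS5 ψ q
  | .diaU ψ, p => ∃ q, q ∈ M.S ∧ q.1 = p.1 ∧ M.satS5 ψ q

/-- Satisfaction when the vertical factor is the difference (Diff) frame on `V`
(`◇U` is read as `◇_v`). -/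
def satDiff (M : ProdModel) : BFml → M.Wh × M.V → Prop
  | .var k, p => p ∈ M.Val k
  | .neg ψ, p => ¬ M.satDiff ψ p
  | .conj ψ χ, p => M.satDiff ψ p ∧ M.satDiff χ p
  | .dia ψ, p => ∃ q, q ∈ M.S ∧ M.Rh p.1 q.1 ∧ p.2 = q.2 ∧ M.satDiff ψ q
  | .diaU ψ, p => ∃ q, q ∈ M.S ∧ q.1 = p.1 ∧ q.2 ≠ p.2 ∧ M.satDiff ψ q

/-- Full product model. -/
def Full (M : ProdModel) : Prop := M.S = Set.univ

/-- Expanding product model. -/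
def Expanding (M : ProdModel) : Prop :=
  ∀ u u' v, (u, v) ∈ M.S → M.Rh u u' → (u', v) ∈ M.S

/-- Decreasing product model. -/
def Decreasing (M : ProdModel) : Prop :=
  ∀ u u' v, (u', v) ∈ M.S → M.Rh u u' → (u, v) ∈ M.S

end ProdModel

/-- The translation ·^†: `p_i^† = P_i(x)`, commuting with ¬ and ∧, `(◇_hψ)^† = ◇ψ^†`,
`(◇_vψ)^† = Q_ψ(x)`. -/
def transDiff (P : ℕ → ℕ) (Q : BFml → ℕ) : BFml → Fml
  | .var k => .atom (P k)
  | .neg ψ => .neg (transDiff P Q ψ)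
  | .conj ψ χ => .conj (transDiff P Q ψ) (transDiff P Q χ)
  | .dia ψ => .dia (transDiff P Q ψ)
  | .diaU ψ => .atom (Q ψ)

/-- `∃^{≠}x χ := (¬χ ∧ ¬∃[≤0]x χ) ∨ ¬∃[≤1]x χ`. -/
def existsNe (χ : Fml) : Fml :=
  ((Fml.neg χ).conj (Fml.neg (Fml.countLe 0 χ))).or (Fml.neg (Fml.countLe 1 χ))

/-- `ζ_Diff := □^{≤m} ⋀_{ψ∈sub(φ)} ∀x(Q_ψ(x) ↔ ∃^{≠}x ψ^†)`. -/
noncomputable def zetaDiff (P : ℕ → ℕ) (Q : BFml → ℕ) (φ : BFml) : Fml :=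
  Fml.boxLe φ.md (conjList (φ.subf.toList.map fun ψ =>
    Fml.fal ((Fml.atom (Q ψ)).iff (existsNe (transDiff P Q ψ)))))

section Aux

/-- `n`-step reachability. -/
def stepsR {W : Type} (R : W → W → Prop) : ℕ → W → W → Prop
  | 0, u, v => u = v
  | n+1, u, v => ∃ x, R u x ∧ stepsR R n x v

lemma sat_top (M : KModel) (w : M.W) (a : M.D) : M.sat Fml.top w a := by
  simp [Fml.top, KModel.sat]

lemma sat_fal (M : KModel) (χ : Fml) (w : M.W) (a : M.D) :
    M.sat (Fml.fal χ) w a ↔ ∀ b ∈ M.dom w, M.sat χ w b := by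
  simp only [Fml.fal, KModel.sat, Nat.cast_zero, nonpos_iff_eq_zero, Set.encard_eq_zero,
    Set.eq_empty_iff_forall_notMem, Set.mem_setOf_eq, not_and, not_not]

lemma sat_iff (M : KModel) (ψ χ : Fml) (w : M.W) (a : M.D) :
    M.sat (ψ.iff χ) w a ↔ (M.sat ψ w a ↔ M.sat χ w a) := by
  simp only [Fml.iff, Fml.imp, KModel.sat]; tauto

lemma sat_conjList (M : KModel) (L : List Fml) (w : M.W) (a : M.D) :
    M.sat (conjList L) w a ↔ ∀ χ ∈ L, M.sat χ w a := by
  induction L with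
  | nil => simpa [conjList] using sat_top M w a
  | cons ψ rest ih => simp [conjList, KModel.sat, ih]

lemma sat_box (M : KModel) (χ : Fml) (w : M.W) (a : M.D) :
    M.sat χ.box w a ↔ ∀ v, M.R w v → M.sat χ v a := by
  simp only [Fml.box, KModel.sat, not_exists, not_and, not_not]

lemma sat_boxIter (M : KModel) (χ : Fml) :
    ∀ (n : ℕ) (w : M.W) (a : M.D),
      M.sat (Fml.boxIter n χ) w a ↔ ∀ v, stepsR M.R n w v → M.sat χ v a := by
  intro n
  induction n with
  | zero => intro w a; simp [Fml.boxIter, stepsR]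
  | succ n ih =>
      intro w a
      rw [Fml.boxIter, sat_box]
      constructor
      · rintro h v ⟨x, hx, hsteps⟩
        exact (ih x a).mp (h x hx) v hsteps
      · intro h v hv
        exact (ih v a).mpr fun u hu => h u ⟨v, hv, hu⟩

lemma sat_boxLe (M : KModel) (χ : Fml) :
    ∀ (m : ℕ) (w : M.W) (a : M.D),
      M.sat (Fml.boxLe m χ) w a ↔ ∀ n ≤ m, M.sat (Fml.boxIter n χ) w a := by
  intro m
  induction m with
  | zero =>
      intro w a
      simp only [Fml.boxLe, Nat.le_zero]
      constructor
      · rintro h n rfl; exact h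
      · intro h; exact h 0 rfl
  | succ m ih =>
      intro w a
      rw [Fml.boxLe]
      constructor
      · rintro ⟨h1, h2⟩ n hn
        rcases Nat.lt_or_ge n (m+1) with h | h
        · exact (ih w a).mp h1 n (Nat.lt_succ_iff.mp h)
        · have : n = m + 1 := le_antisymm hn h
          subst this; exact h2
      · intro h
        exact ⟨(ih w a).mpr fun n hn => h n (le_trans hn (Nat.le_succ m)),
          h (m+1) le_rfl⟩

lemma sat_existsNe (M : KModel) (χ : Fml) (w : M.W) (a : M.D) (ha : a ∈ M.dom w) :
    M.sat (existsNe χ) w a ↔ ∃ b ∈ M.dom w, b ≠ a ∧ M.sat χ w b := by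
  have hT : M.sat (existsNe χ) w a ↔
      ((¬ M.sat χ w a ∧ ¬ ({b | b ∈ M.dom w ∧ M.sat χ w b}.encard ≤ (0 : ℕ∞))) ∨
        ¬ ({b | b ∈ M.dom w ∧ M.sat χ w b}.encard ≤ (1 : ℕ∞))) := by
    simp only [existsNe, Fml.or, KModel.sat, Nat.cast_zero, Nat.cast_one]
    tauto
  rw [hT]
  have h0 : ¬ ({b | b ∈ M.dom w ∧ M.sat χ w b}.encard ≤ (0 : ℕ∞)) ↔
      {b | b ∈ M.dom w ∧ M.sat χ w b}.Nonempty := by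
    rw [nonpos_iff_eq_zero, Set.encard_eq_zero, ← ne_eq, Set.nonempty_iff_ne_empty]
  have h1 : ¬ ({b | b ∈ M.dom w ∧ M.sat χ w b}.encard ≤ (1 : ℕ∞)) ↔
      ∃ x y, x ∈ {b | b ∈ M.dom w ∧ M.sat χ w b} ∧ y ∈ {b | b ∈ M.dom w ∧ M.sat χ w b} ∧ x ≠ y := by
    rw [not_le, Set.one_lt_encard_iff]
  rw [h0, h1]
  constructor
  · rintro (⟨hna, b, hb, hsb⟩ | ⟨b, c, ⟨hb, hsb⟩, ⟨hc, hsc⟩, hbc⟩)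
    · exact ⟨b, hb, fun hba => hna (hba ▸ hsb), hsb⟩
    · rcases eq_or_ne b a with rfl | hba
      · exact ⟨c, hc, fun h => hbc h.symm, hsc⟩
      · exact ⟨b, hb, hba, hsb⟩
  · rintro ⟨b, hb, hba, hsb⟩
    by_cases hsa : M.sat χ w a
    · exact Or.inr ⟨b, a, ⟨hb, hsb⟩, ⟨ha, hsa⟩, hba⟩
    · exact Or.inl ⟨hsa, b, hb, hsb⟩

lemma mem_subf_self : ∀ ψ : BFml, ψ ∈ ψ.subf := by
  intro ψ; cases ψ <;> simp [BFml.subf]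

lemma subf_trans : ∀ χ ψ : BFml, ψ ∈ χ.subf → ψ.subf ⊆ χ.subf := by
  intro χ
  induction χ with
  | var n => intro ψ h; simp [BFml.subf] at h; subst h; exact subset_rfl
  | neg χ ih =>
      intro ψ h
      rw [BFml.subf] at h ⊢
      rcases Finset.mem_insert.mp h with rfl | h
      · exact subset_rfl
      · exact (ih ψ h).trans (Finset.subset_insert _ _)
  | conj χ₁ χ₂ ih1 ih2 =>
      intro ψ h
      rw [BFml.subf] at h ⊢
      rcases Finset.mem_insert.mp h with rfl | h
      · exact subset_rfl
      · rcases Finset.mem_union.mp h with h | h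
        · exact (ih1 ψ h).trans ((Finset.subset_union_left).trans (Finset.subset_insert _ _))
        · exact (ih2 ψ h).trans ((Finset.subset_union_right).trans (Finset.subset_insert _ _))
  | dia χ ih =>
      intro ψ h
      rw [BFml.subf] at h ⊢
      rcases Finset.mem_insert.mp h with rfl | h
      · exact subset_rfl
      · exact (ih ψ h).trans (Finset.subset_insert _ _)
  | diaU χ ih =>
      intro ψ h
      rw [BFml.subf] at h ⊢
      rcases Finset.mem_insert.mp h with rfl | h
      · exact subset_rfl
      · exact (ih ψ h).trans (Finset.subset_insert _ _)

lemma cpt_trans (P : ℕ → ℕ) (Q : BFml → ℕ) : ∀ ψ : BFml, (transDiff P Q ψ).cpt = 0 := by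
  intro ψ
  induction ψ <;> simp [transDiff, Fml.cpt, *]

lemma cpt_boxIter (χ : Fml) : ∀ n, (Fml.boxIter n χ).cpt = χ.cpt := by
  intro n
  induction n with
  | zero => rfl
  | succ n ih => simp [Fml.boxIter, Fml.box, Fml.cpt, ih]

lemma cpt_boxLe (χ : Fml) : ∀ m, (Fml.boxLe m χ).cpt = χ.cpt := by
  intro m
  induction m with
  | zero => rfl
  | succ m ih => simp [Fml.boxLe, Fml.cpt, ih, cpt_boxIter]

lemma cpt_conjList (L : List Fml) (h : ∀ χ ∈ L, χ.cpt ≤ 1) : (conjList L).cpt ≤ 1 := by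
  induction L with
  | nil => simp [conjList, Fml.top, Fml.cpt]
  | cons ψ rest ih =>
      simp only [conjList, Fml.cpt, max_le_iff]
      exact ⟨h ψ List.mem_cons_self, ih fun χ hχ => h χ (List.mem_cons_of_mem _ hχ)⟩

lemma stepsR_snoc {W : Type} {R : W → W → Prop} :
    ∀ {n u v x}, stepsR R n u v → R v x → stepsR R (n+1) u x := by
  intro n
  induction n with
  | zero => rintro u v x rfl h; exact ⟨x, h, rfl⟩
  | succ n ih => rintro u v x ⟨y, hy, hs⟩ h; exact ⟨y, hy, ih hs h⟩

/-- From a full product model to a first-order Kripke model. -/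
def prodToK (P : ℕ → ℕ) (Q : BFml → ℕ) (M : ProdModel) : KModel where
  W := M.Wh
  R := M.Rh
  D := M.V
  Dne := M.Vne
  dom := fun _ => Set.univ
  domNe := fun _ => @Set.univ_nonempty _ M.Vne
  I := fun w n => {v | (∃ k, n = P k ∧ (w, v) ∈ M.Val k) ∨
    ∃ ψ, n = Q ψ ∧ M.satDiff (.diaU ψ) (w, v)}
  Isub := fun _ _ => Set.subset_univ _

lemma prodToK_sat (P : ℕ → ℕ) (Q : BFml → ℕ) (hPinj : Function.Injective P)
    (hQinj : Function.Injective Q) (hPQ : ∀ k ψ, P k ≠ Q ψ)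
    (M : ProdModel) (hfull : M.Full) :
    ∀ (ψ : BFml) (w : M.Wh) (a : M.V),
      (prodToK P Q M).sat (transDiff P Q ψ) w a ↔ M.satDiff ψ (w, a) := by
  intro ψ
  induction ψ with
  | var k =>
      intro w a
      simp only [transDiff, KModel.sat, prodToK, Set.mem_setOf_eq, ProdModel.satDiff]
      constructor
      · rintro (⟨k', hk, hv⟩ | ⟨ψ, hk, _⟩)
        · cases hPinj hk; exact hv
        · exact absurd hk (hPQ k ψ)
      · intro hv; exact Or.inl ⟨k, rfl, hv⟩
  | neg ψ ih => intro w a; simp only [transDiff, KModel.sat, ProdModel.satDiff, ih]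
  | conj ψ χ ih1 ih2 =>
      intro w a; simp only [transDiff, KModel.sat, ProdModel.satDiff, ih1, ih2]
  | dia ψ ih =>
      intro w a
      simp only [transDiff, KModel.sat, ProdModel.satDiff]
      constructor
      · rintro ⟨v, hR, hs⟩
        exact ⟨(v, a), by rw [hfull]; trivial, hR, rfl, (ih v a).mp hs⟩
      · rintro ⟨⟨u, b⟩, -, hR, hab, hs⟩
        cases hab
        exact ⟨u, hR, (ih u b).mpr hs⟩
  | diaU ψ _ =>
      intro w a
      simp only [transDiff, KModel.sat, prodToK, Set.mem_setOf_eq]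
      constructor
      · rintro (⟨k, hk, _⟩ | ⟨ψ', hk, hs⟩)
        · exact absurd hk.symm (hPQ k ψ)
        · cases hQinj hk; exact hs
      · intro hs; exact Or.inr ⟨ψ, rfl, hs⟩

/-- From a constant-domain Kripke model back to a full product model. -/
def kToProd (P : ℕ → ℕ) (N : KModel) (w₀ : N.W) (a₀ : N.D) (ha : a₀ ∈ N.dom w₀) :
    ProdModel where
  Wh := N.W
  Rh := N.R
  V := ↥(N.dom w₀)
  Vne := ⟨⟨a₀, ha⟩⟩
  S := Set.univ
  Sne := ⟨(w₀, ⟨a₀, ha⟩), trivial⟩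
  Val := fun k => {p | (p.2 : N.D) ∈ N.I p.1 (P k)}

end Aux

/-- with P_i and Q_ψ pairwise distinct fresh unary predicates, φ is
satisfiable in a full product model with difference (Diff) vertical factor iff
`ζ_Diff ∧ φ^†` is satisfiable with respect to QK; moreover all counting quantifiers
in `ζ_Diff ∧ φ^†` have subscripts at most 1. -/
theorem stmt_14 (φ : BFml) (P : ℕ → ℕ) (Q : BFml → ℕ)
    (hPinj : Function.Injective P) (hQinj : Function.Injective Q)
    (hPQ : ∀ k ψ, P k ≠ Q ψ) :
    ((∃ M : ProdModel, M.Full ∧ ∃ p ∈ M.S, M.satDiff φ p) ↔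
      satQK (Fml.conj (zetaDiff P Q φ) (transDiff P Q φ))) ∧
    (Fml.conj (zetaDiff P Q φ) (transDiff P Q φ)).cpt ≤ 1 := by
  constructor
  · constructor
    · -- forward direction
      rintro ⟨M, hfull, ⟨w, a⟩, -, hp⟩
      refine ⟨prodToK P Q M, fun _ _ => rfl, w, a, Set.mem_univ _, ?_, ?_⟩
      · -- ζ_Diff holds
        rw [zetaDiff]; refine (sat_boxLe _ _ _ _ _).mpr ?_
        intro n _
        refine (sat_boxIter _ _ _ _ _).mpr ?_
        intro v _
        refine (sat_conjList _ _ _ _).mpr ?_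
        intro χ hχ
        obtain ⟨ψ, hψ, rfl⟩ := List.mem_map.mp hχ
        refine (sat_fal _ _ _ _).mpr ?_
        intro c _
        rw [sat_iff]
        rw [show (Fml.atom (Q ψ)) = transDiff P Q (.diaU ψ) from rfl,
          prodToK_sat P Q hPinj hQinj hPQ M hfull (.diaU ψ) v c,
          sat_existsNe _ _ _ _ (Set.mem_univ c)]
        simp only [ProdModel.satDiff]
        constructor
        · rintro ⟨⟨u, b⟩, -, h1, h2, hs⟩
          cases h1
          exact ⟨b, Set.mem_univ b, h2,
            (prodToK_sat P Q hPinj hQinj hPQ M hfull ψ u b).mpr hs⟩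
        · rintro ⟨b, -, hbc, hs⟩
          exact ⟨(v, b), by rw [hfull]; trivial, rfl, hbc,
            (prodToK_sat P Q hPinj hQinj hPQ M hfull ψ v b).mp hs⟩
      · exact (prodToK_sat P Q hPinj hQinj hPQ M hfull φ w a).mpr hp
    · -- backward direction
      rintro ⟨N, hcd, w₀, a₀, ha₀, hζ, hφ⟩
      have hdom : ∀ w, N.dom w = N.dom w₀ := fun w => hcd w w₀
      -- the conjuncts of ζ hold at all worlds within φ.md steps
      have hGood : ∀ n ≤ φ.md, ∀ w, stepsR N.R n w₀ w → ∀ b ∈ N.dom w, ∀ ψ ∈ φ.subf,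
          (N.sat (.atom (Q ψ)) w b ↔ N.sat (existsNe (transDiff P Q ψ)) w b) := by
        intro n hn w hw b hb ψ hψ
        have h1 := (sat_boxIter N _ n w₀ a₀).mp ((sat_boxLe N _ φ.md w₀ a₀).mp hζ n hn) w hw
        rw [sat_conjList] at h1
        have h2 := h1 (Fml.fal ((Fml.atom (Q ψ)).iff (existsNe (transDiff P Q ψ))))
          (List.mem_map_of_mem (Finset.mem_toList.mpr hψ))
        rw [sat_fal] at h2
        have h3 := h2 b hb
        rwa [sat_iff] at h3
      set M : ProdModel := kToProd P N w₀ a₀ ha₀ with hM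
      have key : ∀ ψ : BFml, ψ ∈ φ.subf → ∀ n, n + ψ.md ≤ φ.md → ∀ w, stepsR N.R n w₀ w →
          ∀ v : ↥(N.dom w₀), (M.satDiff ψ (w, v) ↔ N.sat (transDiff P Q ψ) w ↑v) := by
        intro ψ
        induction ψ with
        | var k =>
            intro _ n hn w hw v
            simp only [ProdModel.satDiff, transDiff, KModel.sat]
            exact Iff.rfl
        | neg ψ ih =>
            intro hmem n hn w hw v
            have hmem' : ψ ∈ φ.subf :=
              subf_trans φ _ hmem (by rw [BFml.subf]; exact Finset.mem_insert_of_mem (mem_subf_self ψ))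
            simp only [BFml.md] at hn
            simp only [ProdModel.satDiff, transDiff, KModel.sat, ih hmem' n hn w hw v]
        | conj ψ χ ih1 ih2 =>
            intro hmem n hn w hw v
            have hmem1 : ψ ∈ φ.subf := subf_trans φ _ hmem
              (by rw [BFml.subf]
                  exact Finset.mem_insert_of_mem (Finset.mem_union_left _ (mem_subf_self ψ)))
            have hmem2 : χ ∈ φ.subf := subf_trans φ _ hmem
              (by rw [BFml.subf]
                  exact Finset.mem_insert_of_mem (Finset.mem_union_right _ (mem_subf_self χ)))
            simp only [BFml.md, max_le_iff] at hn
            simp only [ProdModel.satDiff, transDiff, KModel.sat,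
              ih1 hmem1 n (by omega) w hw v, ih2 hmem2 n (by omega) w hw v]
        | dia ψ ih =>
            intro hmem n hn w hw v
            have hmem' : ψ ∈ φ.subf :=
              subf_trans φ _ hmem (by rw [BFml.subf]; exact Finset.mem_insert_of_mem (mem_subf_self ψ))
            simp only [BFml.md] at hn
            simp only [ProdModel.satDiff, transDiff, KModel.sat]
            constructor
            · rintro ⟨⟨u, c⟩, -, hR, hvc, hs⟩
              cases hvc
              exact ⟨u, hR, (ih hmem' (n+1) (by omega) u (stepsR_snoc hw hR) c).mp hs⟩
            · rintro ⟨u, hR, hs⟩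
              exact ⟨(u, v), trivial, hR, rfl,
                (ih hmem' (n+1) (by omega) u (stepsR_snoc hw hR) v).mpr hs⟩
        | diaU ψ ih =>
            intro hmem n hn w hw v
            have hmem' : ψ ∈ φ.subf :=
              subf_trans φ _ hmem (by rw [BFml.subf]; exact Finset.mem_insert_of_mem (mem_subf_self ψ))
            simp only [BFml.md] at hn
            have hvdom : (v : N.D) ∈ N.dom w := by rw [hdom w]; exact v.2
            have hg := hGood n (by omega) w hw (↑v) hvdom ψ hmem'
            rw [show transDiff P Q (.diaU ψ) = .atom (Q ψ) from rfl, hg,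
              sat_existsNe N _ w (↑v) hvdom]
            simp only [ProdModel.satDiff]
            constructor
            · rintro ⟨⟨u, c⟩, -, h1, h2, hs⟩
              cases h1
              let c' : ↥(N.dom w₀) := c
              refine ⟨c'.1, by rw [hdom u]; exact c'.2, fun hcv => h2 (Subtype.ext hcv), ?_⟩
              exact (ih hmem' n (by omega) u hw c').mp hs
            · rintro ⟨b, hb, hbv, hs⟩
              rw [hdom w] at hb
              refine ⟨(w, ⟨b, hb⟩), trivial, rfl, fun h => hbv (congrArg Subtype.val h), ?_⟩
              exact (ih hmem' n (by omega) w hw ⟨b, hb⟩).mpr hs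
      refine ⟨M, rfl, (w₀, ⟨a₀, ha₀⟩), trivial, ?_⟩
      exact (key φ (mem_subf_self φ) 0 (by omega) w₀ rfl ⟨a₀, ha₀⟩).mpr hφ
  · -- capacity bound
    have h1 : (zetaDiff P Q φ).cpt ≤ 1 := by
      rw [zetaDiff, cpt_boxLe]
      apply cpt_conjList
      intro χ hχ
      obtain ⟨ψ, -, rfl⟩ := List.mem_map.mp hχ
      simp [Fml.fal, Fml.iff, Fml.imp, Fml.or, existsNe, Fml.cpt, cpt_trans]
    simp only [Fml.cpt, max_le_iff]
    exact ⟨h1, by rw [cpt_trans]; omega⟩
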